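/- Let q be a prime power, n = 4a, s = 2a, and α ∈ F_{q^n} \ F_{q^s}. Then α^{q^s}·span_{F_{q^a}}{1,α} ∩ span_{F_{q^a}}{1,α} ≠ {0}. -/

import Mathlib

open Polynomial in
/-- Any root of `X ^ |F| - X` lies in the subfield `F` (counting roots). -/
lemma aux_mem_of_pow_card {K : Type*} [Field K] [Fintype K] (F : Subfield K) {y : K}
    (hy : y ^ Nat.card F = y) : y ∈ F := by
  classical
  haveI : Fintype ↥F := Fintype.ofFinite _
  rw [Nat.card_eq_fintype_card] at hy
  by_contra hy'
  set m := Fintype.card ↥F with hm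
  have hm1 : 1 < m := Fintype.one_lt_card
  set P : Polynomial K := X ^ m - X with hPdef
  have hP : P ≠ 0 := FiniteField.X_pow_card_sub_X_ne_zero K hm1
  have hroot : ∀ z : K, z ^ m = z → z ∈ P.roots := by
    intro z hz
    rw [Polynomial.mem_roots hP]
    simp [hPdef, Polynomial.IsRoot, sub_eq_zero, hz]
  have hAmem : ∀ z : K, z ∈ F → z ∈ P.roots := by
    intro z hzF
    apply hroot
    have h := congrArg (Subtype.val) (FiniteField.pow_card (⟨z, hzF⟩ : ↥F))
    simpa [SubmonoidClass.coe_pow] using h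
  set A : Finset K := Finset.univ.image (Subtype.val : ↥F → K) with hA
  have hAcard : A.card = m := by
    rw [hA, Finset.card_image_of_injective _ Subtype.val_injective, Finset.card_univ]
  have hsub : insert y A ⊆ P.roots.toFinset := by
    intro z hz
    rw [Multiset.mem_toFinset]
    rcases Finset.mem_insert.mp hz with rfl | hz
    · exact hroot _ hy
    · have : z ∈ F := by simpa [hA] using hz
      exact hAmem z this
  have hyA : y ∉ A := by simp [hA, hy']
  have h1 : m + 1 ≤ P.roots.toFinset.card := by
    rw [← hAcard, ← Finset.card_insert_of_notMem hyA]
    exact Finset.card_le_card hsub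
  have h2 : P.roots.toFinset.card ≤ m := by
    calc P.roots.toFinset.card ≤ Multiset.card P.roots := Multiset.toFinset_card_le _
    _ ≤ P.natDegree := Polynomial.card_roots' P
    _ = m := FiniteField.X_pow_card_sub_X_natDegree_eq K hm1
  omega

/-- If `|Fs| = |Fa|^2` and `T ∈ Fs \ Fa`, then every element of `Fs` is `e + f*T` with
`e, f ∈ Fa` (counting). -/
lemma aux_span_pair {K : Type*} [Field K] [Fintype K] (Fa Fs : Subfield K) (hle : Fa ≤ Fs)
    (hcard : Nat.card Fs = Nat.card Fa ^ 2) {T : K} (hT : T ∈ Fs) (hT' : T ∉ Fa)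
    {N : K} (hN : N ∈ Fs) : ∃ e f : K, e ∈ Fa ∧ f ∈ Fa ∧ N = e + f * T := by
  classical
  haveI : Fintype ↥Fa := Fintype.ofFinite _
  haveI : Fintype ↥Fs := Fintype.ofFinite _
  rw [Nat.card_eq_fintype_card, Nat.card_eq_fintype_card] at hcard
  set A : Finset K := Finset.univ.image (Subtype.val : ↥Fa → K) with hA
  set B : Finset K := Finset.univ.image (Subtype.val : ↥Fs → K) with hB
  have hmemA : ∀ z : K, z ∈ A ↔ z ∈ Fa := by intro z; simp [hA]
  have hmemB : ∀ z : K, z ∈ B ↔ z ∈ Fs := by intro z; simp [hB]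
  have hAcard : A.card = Fintype.card ↥Fa := by
    rw [hA, Finset.card_image_of_injective _ Subtype.val_injective, Finset.card_univ]
  have hBcard : B.card = Fintype.card ↥Fs := by
    rw [hB, Finset.card_image_of_injective _ Subtype.val_injective, Finset.card_univ]
  set S : Finset K := (A ×ˢ A).image (fun p : K × K => p.1 + p.2 * T) with hS
  have hinj : Set.InjOn (fun p : K × K => p.1 + p.2 * T) ↑(A ×ˢ A) := by
    rintro ⟨e, f⟩ h1 ⟨e', f'⟩ h2 h
    simp only [Finset.coe_product, Set.mem_prod, Finset.mem_coe, hmemA] at h1 h2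
    simp only at h
    have hff' : f = f' := by
      by_contra hne
      apply hT'
      have hTeq : T = (e' - e) / (f - f') := by
        rw [eq_div_iff (sub_ne_zero.mpr hne)]
        linear_combination h
      rw [hTeq]
      exact Fa.div_mem (Fa.sub_mem h2.1 h1.1) (Fa.sub_mem h1.2 h2.2)
    have he : e = e' := by
      rw [hff'] at h
      exact add_right_cancel h
    simp [he, hff']
  have hScard : S.card = Fintype.card ↥Fs := by
    rw [hS, Finset.card_image_of_injOn hinj, Finset.card_product, hAcard, hcard, sq]
  have hSB : S ⊆ B := by
    intro z hz
    rw [hS, Finset.mem_image] at hz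
    obtain ⟨⟨e, f⟩, hp, rfl⟩ := hz
    rw [Finset.mem_product] at hp
    rw [hmemB]
    exact Fs.add_mem (hle ((hmemA _).mp hp.1)) (Fs.mul_mem (hle ((hmemA _).mp hp.2)) hT)
  have hSeq : S = B := Finset.eq_of_subset_of_card_le hSB (by rw [hScard, hBcard])
  have hNS : N ∈ S := by rw [hSeq, hmemB]; exact hN
  rw [hS, Finset.mem_image] at hNS
  obtain ⟨⟨e, f⟩, hp, hef⟩ := hNS
  rw [Finset.mem_product] at hp
  exact ⟨e, f, (hmemA _).mp hp.1, (hmemA _).mp hp.2, hef.symm⟩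

/-- Let `K = F_{q^{4a}}` with subfields `F_{q^a} ≤ F_{q^{2a}}` (encoded via cardinalities)
and `α ∈ K \ F_{q^{2a}}`. Then `α^{q^{2a}}·span_{F_{q^a}}{1,α} ∩ span_{F_{q^a}}{1,α} ≠ {0}`. -/
theorem stmt16 (K : Type*) [Field K] [Fintype K]
    (Fa Fs : Subfield K) (hle : Fa ≤ Fs)
    (hK : Nat.card K = Nat.card Fa ^ 4) (hFs : Nat.card Fs = Nat.card Fa ^ 2)
    (α : K) (hα : α ∉ Fs) :
    ∃ x : K, x ≠ 0 ∧ x ∈ Submodule.span (↥Fa) ({1, α} : Set K) ∧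
      ∃ u ∈ Submodule.span (↥Fa) ({1, α} : Set K), x = α ^ Nat.card Fs * u := by
  classical
  haveI : Fintype ↥Fs := Fintype.ofFinite _
  set m := Nat.card ↥Fs with hmdef
  have hm : m = Fintype.card ↥Fs := Nat.card_eq_fintype_card
  have hKm : Fintype.card K = m ^ 2 := by
    rw [← Nat.card_eq_fintype_card, hK, hFs]; ring
  have hαFa : α ∉ Fa := fun h => hα (hle h)
  have hα0 : α ≠ 0 := fun h => hα (h ▸ Fs.zero_mem)
  have hpowK : ∀ x : K, x ^ m ^ 2 = x := by
    intro x; rw [← hKm]; exact FiniteField.pow_card x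
  set β := α ^ m with hβ
  have hβ0 : β ≠ 0 := pow_ne_zero _ hα0
  have hβm : β ^ m = α := by rw [hβ, ← pow_mul, ← sq, hpowK]
  set T := α + β with hT
  set N := α * β with hN
  -- characteristic
  haveI : CharP ↥Fs (ringChar ↥Fs) := ringChar.charP ↥Fs
  obtain ⟨n, hprime, hcardFs⟩ := FiniteField.card ↥Fs (ringChar ↥Fs)
  set p := ringChar ↥Fs with hp
  haveI : Fact p.Prime := ⟨hprime⟩
  haveI : CharP K p := charP_of_injective_ringHom (f := Fs.subtype) Subtype.coe_injective p
  have hmp : m = p ^ (n : ℕ) := by rw [hm, hcardFs]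
  -- T,N are fixed by Frobenius, hence lie in Fs
  have hTm : T ^ m = T := by
    rw [hT, hmp, add_pow_char_pow, ← hmp, hβm, add_comm]
  have hNm : N ^ m = N := by
    rw [hN, mul_pow, hβm, mul_comm]
  have hTFs : T ∈ Fs := aux_mem_of_pow_card Fs hTm
  have hNFs : N ∈ Fs := aux_mem_of_pow_card Fs hNm
  -- find (c,d) ∈ Fa², with c + d*α ≠ 0, such that c*T + d*N ∈ Fa
  obtain ⟨c, d, hc, hd, hg, hcd⟩ :
      ∃ c d : K, c ∈ Fa ∧ d ∈ Fa ∧ c * T + d * N ∈ Fa ∧ c + d * α ≠ 0 := by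
    by_cases hNFa : N ∈ Fa
    · refine ⟨0, 1, Fa.zero_mem, Fa.one_mem, by simpa using hNFa, by simpa using hα0⟩
    by_cases hTFa : T ∈ Fa
    · refine ⟨1, 0, Fa.one_mem, Fa.zero_mem, by simpa using hTFa, by simp⟩
    obtain ⟨e, f, he, hf, hef⟩ := aux_span_pair Fa Fs hle hFs hTFs hTFa hNFs
    refine ⟨-f, 1, Fa.neg_mem hf, Fa.one_mem, ?_, ?_⟩
    · have hcomb : -f * T + 1 * N = e := by rw [hef]; ring
      rw [hcomb]; exact he
    · intro h
      apply hαFa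
      have : α = f := by linear_combination h
      rw [this]; exact hf
  have h1 : (1 : K) ∈ ({1, α} : Set K) := by simp
  have h2 : α ∈ ({1, α} : Set K) := by simp
  have hsmul : ∀ (a : K) (ha : a ∈ Fa) (x : K), (⟨a, ha⟩ : ↥Fa) • x = a * x :=
    fun _ _ _ => rfl
  refine ⟨β * (c + d * α), mul_ne_zero hβ0 hcd, ?_, c + d * α, ?_, rfl⟩
  · have hkey : β * (c + d * α) =
        (⟨c * T + d * N, hg⟩ : ↥Fa) • (1 : K) + (⟨-c, Fa.neg_mem hc⟩ : ↥Fa) • α := by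
      rw [hsmul, hsmul, hT, hN]; ring
    rw [hkey]
    exact Submodule.add_mem _
      (Submodule.smul_mem _ _ (Submodule.subset_span h1))
      (Submodule.smul_mem _ _ (Submodule.subset_span h2))
  · have hkey : c + d * α = (⟨c, hc⟩ : ↥Fa) • (1 : K) + (⟨d, hd⟩ : ↥Fa) • α := by
      rw [hsmul, hsmul]; ring
    rw [hkey]
    exact Submodule.add_mem _
      (Submodule.smul_mem _ _ (Submodule.subset_span h1))
      (Submodule.smul_mem _ _ (Submodule.subset_span h2))
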